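/- arXiv:1603.08610 — 2 statements merged into one kernel-verified Lean document; each statement's English description precedes it below -/
import Mathlib

section
/- Let D be a nonempty open bounded convex subset of ℝ^k with 0 ∈ D, and let π be the metric projection onto the closure of D. Then there exists γ > 0 such that for all x ∈ ℝ^k, ⟨x, x - π(x)⟩ ≥ γ |x - π(x)|. -/
theorem stmt2 {k : ℕ} (D : Set (EuclideanSpace ℝ (Fin k)))
    (hopen : IsOpen D) (hbdd : Bornology.IsBounded D) (hconv : Convex ℝ D)
    (h0 : (0 : EuclideanSpace ℝ (Fin k)) ∈ D)
    (π : EuclideanSpace ℝ (Fin k) → EuclideanSpace ℝ (Fin k))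
    (hmem : ∀ x, π x ∈ closure D)
    (hmin : ∀ x, ∀ y ∈ closure D, dist x (π x) ≤ dist x y) :
    ∃ γ > (0 : ℝ), ∀ x : EuclideanSpace ℝ (Fin k),
      γ * ‖x - π x‖ ≤ (inner ℝ x (x - π x) : ℝ) := by
  obtain ⟨ε, hε, hball⟩ := Metric.isOpen_iff.mp hopen 0 h0
  refine ⟨ε / 2, by linarith, fun x => ?_⟩
  -- variational characterization
  have hconv' : Convex ℝ (closure D) := hconv.closure
  have hinner : ∀ w ∈ closure D, (inner ℝ (x - π x) (w - π x) : ℝ) ≤ 0 := by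
    haveI : Nonempty ↑(closure D) := ⟨⟨π x, hmem x⟩⟩
    have hiInf : ‖x - π x‖ = ⨅ w : closure D, ‖x - w‖ := by
      apply le_antisymm
      · exact le_ciInf fun w => by
          simpa [dist_eq_norm] using hmin x w w.2
      · exact ciInf_le ⟨0, fun r ⟨w, hw⟩ => hw ▸ norm_nonneg _⟩ (⟨π x, hmem x⟩ : closure D)
    exact (norm_eq_iInf_iff_real_inner_le_zero hconv' (hmem x)).mp hiInf
  by_cases hx : x - π x = 0
  · simp [hx]
  · set u : EuclideanSpace ℝ (Fin k) := (‖x - π x‖)⁻¹ • (x - π x) with hu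
    have hnorm : ‖x - π x‖ > 0 := norm_pos_iff.mpr hx
    have hununit : ‖u‖ = 1 := by
      rw [hu, norm_smul, norm_inv, norm_norm, inv_mul_cancel₀ (ne_of_gt hnorm)]
    have hmemw : (ε / 2) • u ∈ closure D := by
      apply subset_closure
      apply hball
      simp only [Metric.mem_ball, dist_zero_right, norm_smul, hununit, mul_one,
        Real.norm_eq_abs, abs_of_pos (by linarith : (0:ℝ) < ε / 2)]
      linarith
    have key := hinner _ hmemw
    have h1 : (inner ℝ (x - π x) ((ε / 2) • u) : ℝ) = (ε / 2) * ‖x - π x‖ := by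
      rw [hu, inner_smul_right, inner_smul_right, real_inner_self_eq_norm_sq]
      field_simp
    have h2 : (inner ℝ (x - π x) ((ε / 2) • u - π x) : ℝ)
        = (ε / 2) * ‖x - π x‖ - inner ℝ (x - π x) (π x) := by
      rw [inner_sub_right, h1]
    have h3 : (ε / 2) * ‖x - π x‖ ≤ (inner ℝ (x - π x) (π x) : ℝ) := by linarith [h2 ▸ key]
    have h4 : (inner ℝ x (x - π x) : ℝ)
        = ‖x - π x‖ ^ 2 + inner ℝ (x - π x) (π x) := by
      have : x = (x - π x) + π x := by abel
      nth_rewrite 1 [this]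
      rw [inner_add_left, real_inner_self_eq_norm_sq, real_inner_comm (π x)]
    nlinarith [sq_nonneg ‖x - π x‖]
end

section
/- Let D be a nonempty closed convex subset of ℝ^k with metric projection π. For any y₁, y₂ ∈ ℝ^k and n, p ≥ 0, one has -n ⟨y₁ - y₂, y₁ - π(y₁)⟩ + p ⟨y₁ - y₂, y₂ - π(y₂)⟩ ≤ (n + p) ⟨y₁ - π(y₁), y₂ - π(y₂)⟩. -/
theorem stmt10 {k : ℕ} (D : Set (EuclideanSpace ℝ (Fin k)))
    (hne : D.Nonempty) (hcl : IsClosed D) (hconv : Convex ℝ D)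
    (π : EuclideanSpace ℝ (Fin k) → EuclideanSpace ℝ (Fin k))
    (hmem : ∀ x, π x ∈ D)
    (hmin : ∀ x, ∀ y ∈ D, dist x (π x) ≤ dist x y)
    (y₁ y₂ : EuclideanSpace ℝ (Fin k)) (n p : ℝ) (hn : 0 ≤ n) (hp : 0 ≤ p) :
    -n * (inner ℝ (y₁ - y₂) (y₁ - π y₁) : ℝ) + p * (inner ℝ (y₁ - y₂) (y₂ - π y₂) : ℝ) ≤
      (n + p) * (inner ℝ (y₁ - π y₁) (y₂ - π y₂) : ℝ) := by
  have key : ∀ x, ∀ w ∈ D, (inner ℝ (x - π x) (w - π x) : ℝ) ≤ 0 := by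
    intro x
    haveI : Nonempty D := ⟨⟨π x, hmem x⟩⟩
    rw [← norm_eq_iInf_iff_real_inner_le_zero hconv (hmem x)]
    refine le_antisymm (le_ciInf fun w => ?_) (ciInf_le ⟨0, fun _ ⟨w, hw⟩ => hw ▸ norm_nonneg _⟩
      (⟨π x, hmem x⟩ : D))
    simpa [dist_eq_norm] using hmin x w w.2
  have h1 : (inner ℝ (y₁ - π y₁) (π y₂ - π y₁) : ℝ) ≤ 0 := key y₁ (π y₂) (hmem y₂)
  have h2 : (inner ℝ (y₂ - π y₂) (π y₁ - π y₂) : ℝ) ≤ 0 := key y₂ (π y₁) (hmem y₁)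
  set a := y₁ - π y₁
  set b := y₂ - π y₂
  have e1 : y₁ - y₂ = a - b + (π y₁ - π y₂) := by simp [a, b]; abel
  have ha : (0:ℝ) ≤ inner ℝ a a := real_inner_self_nonneg
  have hb : (0:ℝ) ≤ inner ℝ b b := real_inner_self_nonneg
  have ex1 : (inner ℝ (y₁ - y₂) a : ℝ)
      = inner ℝ a a - inner ℝ b a + inner ℝ (π y₁ - π y₂) a := by
    rw [e1, inner_add_left, inner_sub_left]
  have ex2 : (inner ℝ (y₁ - y₂) b : ℝ)
      = inner ℝ a b - inner ℝ b b + inner ℝ (π y₁ - π y₂) b := by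
    rw [e1, inner_add_left, inner_sub_left]
  have hsym : (inner ℝ b a : ℝ) = inner ℝ a b := real_inner_comm _ _
  have h1' : (0:ℝ) ≤ inner ℝ (π y₁ - π y₂) a := by
    have := h1
    rw [real_inner_comm, show π y₂ - π y₁ = -(π y₁ - π y₂) by abel, inner_neg_left] at this
    linarith
  have h2' : (inner ℝ (π y₁ - π y₂) b : ℝ) ≤ 0 := by
    rwa [real_inner_comm] at h2
  rw [ex1, ex2, hsym]
  nlinarith [mul_nonneg hn ha, mul_nonneg hp hb, mul_nonneg hn h1',
    mul_nonpos_of_nonneg_of_nonpos hp h2']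
end
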